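/- With μ = 8, σ = 3, for Q₁ any probability measure on [1−ε, 3+ε] (0 < ε < 1/4) with mean 2 and variance 1, define φ(d) = E_{Q₁}[|10 − D₁ − d|]. Then φ(d) ≤ (1/6)(d−8)² + 3/2 for all d ∈ ℝ, with equality at d = 5 and d = 11. -/

import Mathlib

open MeasureTheory Set

/-- For any probability measure Q₁ on [1−ε,3+ε] with mean 2 and second moment 5,
φ(d) = E[|10 − D₁ − d|] satisfies φ(d) ≤ (1/6)(d−8)² + 3/2 for all d, with
equality at d = 5 and d = 11. -/
theorem phi_quadratic_bound (ε : ℝ) (hε : 0 < ε) (hε' : ε < 1/4)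
    (Q₁ : Measure ℝ) [IsProbabilityMeasure Q₁]
    (hsupp : Q₁ (Set.Icc (1 - ε) (3 + ε))ᶜ = 0)
    (hm1 : (∫ t, t ∂Q₁) = 2) (hm2 : (∫ t, t ^ 2 ∂Q₁) = 5) :
    (∀ d : ℝ, (∫ t, |10 - t - d| ∂Q₁) ≤ (1/6) * (d - 8) ^ 2 + 3/2) ∧
    (∫ t, |10 - t - 5| ∂Q₁) = (1/6) * ((5:ℝ) - 8) ^ 2 + 3/2 ∧
    (∫ t, |10 - t - 11| ∂Q₁) = (1/6) * ((11:ℝ) - 8) ^ 2 + 3/2 := by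
  have hae : ∀ᵐ t ∂Q₁, t ∈ Set.Icc (1 - ε) (3 + ε) := by
    rw [ae_iff]
    convert hsupp using 2
    rfl
  have hae' : ∀ᵐ t ∂Q₁, 3/4 ≤ t ∧ t ≤ 13/4 := by
    filter_upwards [hae] with t ht
    exact ⟨by linarith [ht.1], by linarith [ht.2]⟩
  have hInt_t : Integrable (fun t : ℝ => t) Q₁ := by
    apply Integrable.mono' (integrable_const (13/4 : ℝ))
      measurable_id.aestronglyMeasurable
    filter_upwards [hae'] with t ht
    simp only [id_eq, Real.norm_eq_abs, abs_le]
    exact ⟨by linarith [ht.1], ht.2⟩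
  have hInt_t2 : Integrable (fun t : ℝ => t ^ 2) Q₁ := by
    apply Integrable.mono' (integrable_const ((13/4 : ℝ) ^ 2)) (by fun_prop)
    filter_upwards [hae'] with t ht
    rw [Real.norm_eq_abs, abs_le]
    constructor <;> nlinarith [ht.1, ht.2]
  have hIntLin : ∀ d : ℝ, Integrable (fun t : ℝ => 10 - t - d) Q₁ := fun d =>
    ((integrable_const (10 : ℝ)).sub hInt_t).sub (integrable_const d)
  have hIntAbs : ∀ d : ℝ, Integrable (fun t : ℝ => |10 - t - d|) Q₁ := fun d =>
    (hIntLin d).abs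
  have hlin : ∀ c : ℝ, (∫ t, (c - t) ∂Q₁) = c - 2 := by
    intro c
    rw [integral_sub (integrable_const c) hInt_t, integral_const, hm1]
    simp
  have hIntSq : ∀ d : ℝ, Integrable (fun t : ℝ => (10 - t - d) ^ 2) Q₁ := by
    intro d
    have heq : (fun t : ℝ => (10 - t - d) ^ 2)
        = fun t : ℝ => t ^ 2 - (20 - 2 * d) * t + (10 - d) ^ 2 := by
      funext t; ring
    rw [heq]
    exact (hInt_t2.sub (hInt_t.const_mul (20 - 2 * d))).add
      (integrable_const ((10 - d) ^ 2))
  have hsq : ∀ d : ℝ, (∫ t, (10 - t - d) ^ 2 ∂Q₁) = (d - 8) ^ 2 + 1 := by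
    intro d
    have heq : (fun t : ℝ => (10 - t - d) ^ 2)
        = fun t : ℝ => t ^ 2 - (20 - 2 * d) * t + (10 - d) ^ 2 := by
      funext t; ring
    rw [heq]
    have e1 : (∫ t, ((20 - 2 * d) * t) ∂Q₁) = (20 - 2 * d) * 2 := by
      rw [integral_const_mul, hm1]
    have i1 : Integrable (fun t : ℝ => (20 - 2 * d) * t) Q₁ :=
      hInt_t.const_mul (20 - 2 * d)
    have i2 : Integrable (fun t : ℝ => t ^ 2 - (20 - 2 * d) * t) Q₁ :=
      hInt_t2.sub i1
    have e2 : (∫ t, (t ^ 2 - (20 - 2 * d) * t) ∂Q₁) = 5 - (20 - 2 * d) * 2 := by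
      rw [integral_sub hInt_t2 i1, hm2, e1]
    rw [integral_add i2 (integrable_const ((10 - d) ^ 2)), e2, integral_const]
    simp; ring
  refine ⟨?_, ?_, ?_⟩
  · intro d
    rcases le_or_gt d (27/4) with hd | hd
    · have h1 : (∫ t, |10 - t - d| ∂Q₁) = (10 - d) - 2 := by
        rw [← hlin (10 - d)]
        apply integral_congr_ae
        filter_upwards [hae'] with t ht
        rw [abs_of_nonneg (by linarith [ht.2])]; ring
      rw [h1]; nlinarith [sq_nonneg (d - 5)]
    rcases le_or_gt (37/4) d with hd' | hd'
    · have h1 : (∫ t, |10 - t - d| ∂Q₁) = d - 8 := by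
        have : (∫ t, |10 - t - d| ∂Q₁) = ∫ t, (t + (d - 10)) ∂Q₁ := by
          apply integral_congr_ae
          filter_upwards [hae'] with t ht
          rw [abs_of_nonpos (by linarith [ht.1])]; ring
        rw [this, integral_add hInt_t (integrable_const (d - 10)), hm1,
          integral_const]
        simp; ring
      rw [h1]; nlinarith [sq_nonneg (d - 11)]
    · have h1 : (∫ t, |10 - t - d| ∂Q₁)
          ≤ ∫ t, ((10 - t - d) ^ 2 / 3 + 3/4) ∂Q₁ := by
        have hint2 : Integrable (fun t : ℝ => (10 - t - d) ^ 2 / 3 + 3/4) Q₁ :=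
          ((hIntSq d).div_const 3).add (integrable_const (3/4 : ℝ))
        have hle : ∀ t : ℝ, |10 - t - d| ≤ (10 - t - d) ^ 2 / 3 + 3/4 := by
          intro t
          nlinarith [sq_nonneg (|10 - t - d| - 3/2), sq_abs (10 - t - d)]
        exact integral_mono (hIntAbs d) hint2 hle
      have h2 : (∫ t, ((10 - t - d) ^ 2 / 3 + 3/4) ∂Q₁)
          = ((d - 8) ^ 2 + 1) / 3 + 3/4 := by
        rw [integral_add ((hIntSq d).div_const 3) (integrable_const (3/4 : ℝ)),
          integral_div, hsq d, integral_const]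
        simp
      rw [h2] at h1
      refine h1.trans ?_
      nlinarith [sq_nonneg (d - 8)]
  · have h1 : (∫ t, |10 - t - 5| ∂Q₁) = ∫ t, ((5 : ℝ) - t) ∂Q₁ := by
      apply integral_congr_ae
      filter_upwards [hae'] with t ht
      rw [abs_of_nonneg (by linarith [ht.2] : (0:ℝ) ≤ 10 - t - 5)]; ring
    rw [h1, hlin]; norm_num
  · have h1 : (∫ t, |10 - t - 11| ∂Q₁) = ∫ t, (t + (1 : ℝ)) ∂Q₁ := by
      apply integral_congr_ae
      filter_upwards [hae'] with t ht
      rw [abs_of_nonpos (by linarith [ht.1] : (10:ℝ) - t - 11 ≤ 0)]; ring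
    rw [h1, integral_add hInt_t (integrable_const (1 : ℝ)), hm1, integral_const]
    simp; norm_num
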